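/- Let M be a closed subset of a real normed space X and S, T : M → M self-mappings with M = S(M). Suppose M has a contractive jointly continuous family ℑ = {f_x : x ∈ M} with contractiveness function Φ : (0,1) → (0,1), the pair (S,T) is a generalized JHℑ-suboperator pair with order n₀ for some n₀ ∈ ℕ, and for all x, y ∈ M and all t ∈ (0,1), ψ(∫₀^{‖Tx−Ty‖} φ(s)ds) ≤ F(ψ(∫₀^{(1/Φ(t))γ(m₄(x,y))} φ(s)ds), φᵤ(∫₀^{(1/Φ(t))γ(m₄(x,y))} φ(s)ds)), where ψ is an altering distance function, φᵤ is an ultra altering distance function, F is a C-class function, and the triple (ψ, φᵤ, F) is monotone. If cl(T(M)) is compact and S and T are continuous, then M ∩ Fix(S) ∩ Fix(T) ≠ ∅. -/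

import Mathlib

open MeasureTheory Filter Topology Set

noncomputable section

/-- The integral `∫₀^a φ(t) dt`. -/
def intPhi (phi : ℝ → ℝ) (a : ℝ) : ℝ := ∫ t in (0:ℝ)..a, phi t

/-- `φ : [0,∞) → [0,∞)` is Lebesgue integrable, summable, nonnegative, with
`∫₀^ε φ(t)dt > 0` for all `ε > 0`. -/
def PhiAdmissible (phi : ℝ → ℝ) : Prop :=
  (∀ t ≥ (0:ℝ), 0 ≤ phi t) ∧ (∀ b : ℝ, IntervalIntegrable phi volume 0 b) ∧
  ∀ ε > (0:ℝ), 0 < intPhi phi ε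

/-- Altering distance function: nondecreasing, continuous, `ψ t = 0 ↔ t = 0` on `[0,∞)`. -/
def AlteringDistance (ψ : ℝ → ℝ) : Prop :=
  MonotoneOn ψ (Ici 0) ∧ ContinuousOn ψ (Ici 0) ∧ ∀ t ≥ (0:ℝ), (ψ t = 0 ↔ t = 0)

/-- Ultra altering distance function: continuous, nondecreasing, positive on `(0,∞)`,
nonnegative at `0`. -/
def UltraAltering (φu : ℝ → ℝ) : Prop :=
  ContinuousOn φu (Ici 0) ∧ MonotoneOn φu (Ici 0) ∧ (∀ t > (0:ℝ), 0 < φu t) ∧ 0 ≤ φu 0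

/-- C-class function: continuous on `[0,∞)²`, `F s t ≤ s`, and `F s t = s → s = 0 ∨ t = 0`. -/
def CClassFun (F : ℝ → ℝ → ℝ) : Prop :=
  ContinuousOn (Function.uncurry F) (Ici 0 ×ˢ Ici 0) ∧
  (∀ s ≥ (0:ℝ), ∀ t ≥ (0:ℝ), F s t ≤ s) ∧
  (∀ s ≥ (0:ℝ), ∀ t ≥ (0:ℝ), F s t = s → s = 0 ∨ t = 0)

/-- The triple `(ψ, φᵤ, F)` is monotone. -/
def MonotoneTriple (ψ φu : ℝ → ℝ) (F : ℝ → ℝ → ℝ) : Prop :=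
  ∀ x y : ℝ, 0 ≤ x → x ≤ y → F (ψ x) (φu x) ≤ F (ψ y) (φu y)

/-- The triple `(ψ, φᵤ, F)` is strictly monotone. -/
def StrictMonotoneTriple (ψ φu : ℝ → ℝ) (F : ℝ → ℝ → ℝ) : Prop :=
  ∀ x y : ℝ, 0 ≤ x → x < y → F (ψ x) (φu x) < F (ψ y) (φu y)

/-- `γ : (0,∞) → (0,∞)` is nondecreasing with `γ t < t` for all `t > 0`. -/
def GammaAdmissible (γ : ℝ → ℝ) : Prop :=
  (∀ t > (0:ℝ), 0 < γ t) ∧ MonotoneOn γ (Ioi 0) ∧ ∀ t > (0:ℝ), γ t < t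

variable {X : Type*} [NormedAddCommGroup X] [NormedSpace ℝ X]

/-- Fixed points of `T` lying in `M`. -/
def FixOn (T : X → X) (M : Set X) : Set X := {x ∈ M | T x = x}

/-- Points of coincidence `PC(S,T)` of the pair `(S,T)` over the set `M`. -/
def PCset (S T : X → X) (M : Set X) : Set X := {w | ∃ x ∈ M, S x = w ∧ T x = w}

/-- `(S,T)` is a generalized JH-operator pair with order `n` on `M`:
there is `x ∈ M` and `w = Sx = Tx ∈ PC(S,T)` with `‖w - x‖ ≤ (δ(PC(S,T)))ⁿ`. -/
def GenJHOp (S T : X → X) (M : Set X) (n : ℕ) : Prop :=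
  ∃ x ∈ M, S x = T x ∧ ‖S x - x‖ ≤ Metric.diam (PCset S T M) ^ n

/-- `(S,T)` is a generalized JH-suboperator pair with order `n` on `M` (w.r.t. `q`):
for each `k ∈ [0,1]`, `(S, T_k)` with `T_k x = (1-k)q + kTx` is a generalized JH-operator
pair with order `n`. -/
def GenJHSubOp (S T : X → X) (M : Set X) (q : X) (n : ℕ) : Prop :=
  ∀ k ∈ Icc (0:ℝ) 1, GenJHOp S (fun x => (1 - k) • q + k • T x) M n

/-- `M` is `q`-starshaped. -/
def Starshaped (M : Set X) (q : X) : Prop :=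
  q ∈ M ∧ ∀ x ∈ M, segment ℝ q x ⊆ M

def m1 (S T : X → X) (x y : X) : ℝ :=
  max (max ‖S x - S y‖ ‖S x - T x‖)
    (max ‖S y - T y‖ ((‖T x - T y‖ + ‖S y - T x‖) / 2))

def n1 (S T : X → X) (x y : X) : ℝ :=
  max ‖S x - S y‖ (max ‖T x - S x‖ ‖S y - T y‖)

def m2 (S T : X → X) (x y : X) : ℝ :=
  max (max ‖S x - S y‖ ‖S x - T x‖)
    (max ‖S y - T y‖ ((‖S x - T y‖ + ‖S y - T x‖) / 2))

def m3 (S T : X → X) (q x y : X) : ℝ :=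
  max (max ‖S x - S y‖ (Metric.infDist (S x) (segment ℝ q (T x))))
    (max (Metric.infDist (S y) (segment ℝ q (T y)))
      ((Metric.infDist (S x) (segment ℝ q (T y)) +
        Metric.infDist (S y) (segment ℝ q (T x))) / 2))

/-- `Y^{a} = {f_a(k) : k ∈ [0,1]}` for a family `f`. -/
def Yfam (f : X → ℝ → X) (a : X) : Set X := f a '' Icc (0:ℝ) 1

def m4 (f : X → ℝ → X) (S T : X → X) (x y : X) : ℝ :=
  max (max ‖S x - S y‖ (Metric.infDist (S x) (Yfam f (T x))))
    (max (Metric.infDist (S y) (Yfam f (T y)))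
      ((Metric.infDist (S x) (Yfam f (T y)) +
        Metric.infDist (S y) (Yfam f (T x))) / 2))

/-- `ℑ = {f_α}_{α ∈ M}` is a family of functions `[0,1] → M` with `f_α(1) = α`. -/
def FamilyOn (f : X → ℝ → X) (M : Set X) : Prop :=
  (∀ a ∈ M, ∀ t ∈ Icc (0:ℝ) 1, f a t ∈ M) ∧ ∀ a ∈ M, f a 1 = a

/-- The family is contractive with contractiveness function `Φ : (0,1) → (0,1)`. -/
def ContractiveFamily (f : X → ℝ → X) (M : Set X) (Phi : ℝ → ℝ) : Prop :=
  (∀ t ∈ Ioo (0:ℝ) 1, Phi t ∈ Ioo (0:ℝ) 1) ∧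
  ∀ a ∈ M, ∀ b ∈ M, ∀ t ∈ Ioo (0:ℝ) 1, ‖f a t - f b t‖ ≤ Phi t * ‖a - b‖

/-- The family is jointly continuous: `tₙ → t₀` and `αₙ → α₀` imply
`f_{αₙ}(tₙ) → f_{α₀}(t₀)`. -/
def JointlyContinuousFamily (f : X → ℝ → X) (M : Set X) : Prop :=
  ∀ (tn : ℕ → ℝ) (t0 : ℝ), (∀ n, tn n ∈ Icc (0:ℝ) 1) → t0 ∈ Icc (0:ℝ) 1 →
    Tendsto tn atTop (𝓝 t0) →
    ∀ (an : ℕ → X) (a0 : X), (∀ n, an n ∈ M) → a0 ∈ M →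
      Tendsto an atTop (𝓝 a0) →
      Tendsto (fun n => f (an n) (tn n)) atTop (𝓝 (f a0 t0))

/-- `(S,T)` is a generalized JHℑ-suboperator pair with order `n` on `M`:
for each `k ∈ [0,1]`, `(S, T_k)` with `T_k x = f_{Tx}(k)` is a generalized
JH-operator pair with order `n`. -/
def GenJHImSubOp (f : X → ℝ → X) (S T : X → X) (M : Set X) (n : ℕ) : Prop :=
  ∀ k ∈ Icc (0:ℝ) 1, GenJHOp S (fun x => f (T x) k) M n

/-- Weak convergence of a sequence. -/
def WeakTendsTo (x : ℕ → X) (a : X) : Prop :=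
  ∀ f : StrongDual ℝ X, Tendsto (fun n => f (x n)) atTop (𝓝 (f a))

/-- Weak (sequential) closure. -/
def WSeqCl (A : Set X) : Set X := {a | ∃ x : ℕ → X, (∀ n, x n ∈ A) ∧ WeakTendsTo x a}

/-- Weak (sequential) compactness. -/
def WSeqCompact (A : Set X) : Prop :=
  ∀ x : ℕ → X, (∀ n, x n ∈ A) →
    ∃ a ∈ A, ∃ g : ℕ → ℕ, StrictMono g ∧ WeakTendsTo (x ∘ g) a

/-- `T` is completely continuous on `M`: weak convergence implies strong
convergence of images. -/
def CompletelyContinuousOn (T : X → X) (M : Set X) : Prop :=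
  ∀ (x : ℕ → X) (a : X), (∀ n, x n ∈ M) → a ∈ M → WeakTendsTo x a →
    Tendsto (fun n => T (x n)) atTop (𝓝 (T a))

/-- `S` is weakly continuous on `M`. -/
def WeaklyContinuousOn (S : X → X) (M : Set X) : Prop :=
  ∀ (x : ℕ → X) (a : X), (∀ n, x n ∈ M) → a ∈ M → WeakTendsTo x a →
    WeakTendsTo (fun n => S (x n)) (S a)

/-- `G` is demiclosed at `0` on `M`. -/
def DemiclosedAtZero (G : X → X) (M : Set X) : Prop :=
  ∀ (x : ℕ → X) (a : X), (∀ n, x n ∈ M) → a ∈ M → WeakTendsTo x a →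
    Tendsto (fun n => G (x n)) atTop (𝓝 (0 : X)) → G a = 0

/-- `T` is hemicompact on `M`. -/
def Hemicompact (T : X → X) (M : Set X) : Prop :=
  ∀ x : ℕ → X, (∀ n, x n ∈ M) →
    Tendsto (fun n => ‖x n - T (x n)‖) atTop (𝓝 (0 : ℝ)) →
    ∃ (a : X) (g : ℕ → ℕ), StrictMono g ∧ Tendsto (x ∘ g) atTop (𝓝 a)

/-- Opial's condition. -/
def OpialCondition (Y : Type*) [NormedAddCommGroup Y] [NormedSpace ℝ Y] : Prop :=
  ∀ (x : ℕ → Y) (a : Y), WeakTendsTo x a → ∀ y : Y, y ≠ a →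
    liminf (fun n => ‖x n - a‖) atTop < liminf (fun n => ‖x n - y‖) atTop

/-- `P_M(u)`, the set of best approximations to `u` out of `M`. -/
def PMset (M : Set X) (u : X) : Set X := {x ∈ M | ‖x - u‖ = Metric.infDist u M}

/-- `C_M^S(u) = {x ∈ M : Sx ∈ P_M(u)}`. -/
def CMSset (M : Set X) (S : X → X) (u : X) : Set X := {x ∈ M | S x ∈ PMset M u}


theorem stmt_9 {X : Type*} [NormedAddCommGroup X] [NormedSpace ℝ X]
    (M : Set X) (hMcl : IsClosed M) (S T : X → X)
    (hS : MapsTo S M M) (hT : MapsTo T M M) (hSM : S '' M = M)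
    (f : X → ℝ → X) (Phi : ℝ → ℝ)
    (hfam : FamilyOn f M) (hcf : ContractiveFamily f M Phi)
    (hjc : JointlyContinuousFamily f M)
    (phi ψ φu : ℝ → ℝ) (F : ℝ → ℝ → ℝ)
    (hphi : PhiAdmissible phi) (hψ : AlteringDistance ψ) (hφu : UltraAltering φu)
    (hF : CClassFun F) (hmono : MonotoneTriple ψ φu F)
    (γ : ℝ → ℝ) (hγ : GammaAdmissible γ)
    (n₀ : ℕ) (hn₀ : 1 ≤ n₀) (hJH : GenJHImSubOp f S T M n₀)
    (hcontr : ∀ x ∈ M, ∀ y ∈ M, ∀ t ∈ Ioo (0:ℝ) 1,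
      ψ (intPhi phi ‖T x - T y‖) ≤
        F (ψ (intPhi phi ((1 / Phi t) * γ (m4 f S T x y))))
          (φu (intPhi phi ((1 / Phi t) * γ (m4 f S T x y)))))
    (hcmp : IsCompact (closure (T '' M)))
    (hScont : ContinuousOn S M) (hTcont : ContinuousOn T M) :
    ∃ x ∈ M, S x = x ∧ T x = x := by
  classical
  obtain ⟨hφnn, hφint, hφpos⟩ := hphi
  -- basic facts about the integral I(a) = ∫₀^a φ
  have hInonneg : ∀ a : ℝ, 0 ≤ a → 0 ≤ intPhi phi a := fun a ha =>
    intervalIntegral.integral_nonneg ha (fun u hu => hφnn u hu.1)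
  have hImono : ∀ a b : ℝ, 0 ≤ a → a ≤ b → intPhi phi a ≤ intPhi phi b := by
    intro a b ha hab
    have h1 : IntervalIntegrable phi volume 0 a := hφint a
    have h2 : IntervalIntegrable phi volume a b := (h1).symm.trans (hφint b)
    have hsum : intPhi phi a + (∫ t in a..b, phi t) = intPhi phi b :=
      intervalIntegral.integral_add_adjacent_intervals h1 h2
    have hnn : 0 ≤ ∫ t in a..b, phi t :=
      intervalIntegral.integral_nonneg hab (fun u hu => hφnn u (le_trans ha hu.1))
    linarith
  -- ψ and φu are nonnegative on [0,∞)
  have hψ0 : ψ 0 = 0 := (hψ.2.2 0 le_rfl).mpr rfl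
  have hψnn : ∀ t : ℝ, 0 ≤ t → 0 ≤ ψ t := by
    intro t ht
    have := hψ.1 (self_mem_Ici) (mem_Ici.mpr ht) ht
    linarith [hψ0]
  have hφunn : ∀ t : ℝ, 0 ≤ t → 0 ≤ φu t := by
    intro t ht
    have := hφu.2.1 (self_mem_Ici) (mem_Ici.mpr ht) ht
    linarith [hφu.2.2.2]
  -- Key step: for each k ∈ (0,1) there is a common fixed point of S and f (T ·) k
  have key : ∀ k ∈ Ioo (0:ℝ) 1, ∃ x ∈ M, S x = x ∧ f (T x) k = x := by
    intro k hk
    have hkIcc : k ∈ Icc (0:ℝ) 1 := ⟨hk.1.le, hk.2.le⟩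
    obtain ⟨x, hxM, hSx, hdiam⟩ := hJH k hkIcc
    have hΦk : Phi k ∈ Ioo (0:ℝ) 1 := hcf.1 k hk
    -- the coincidence point set is a subsingleton
    have hsub : (PCset S (fun x => f (T x) k) M).Subsingleton := by
      rintro w1 ⟨x1, hx1, hS1, hT1⟩ w2 ⟨x2, hx2, hS2, hT2⟩
      by_contra hne
      have hd : 0 < ‖w1 - w2‖ := by
        rw [norm_pos_iff, sub_ne_zero]; exact hne
      set d := ‖w1 - w2‖ with hd_def
      have hTx1 : T x1 ∈ M := hT hx1
      have hTx2 : T x2 ∈ M := hT hx2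
      have hf1 : f (T x1) k = w1 := hT1
      have hf2 : f (T x2) k = w2 := hT2
      have hw1mem : w1 ∈ Yfam f (T x1) := ⟨k, hkIcc, hf1⟩
      have hw2mem : w2 ∈ Yfam f (T x2) := ⟨k, hkIcc, hf2⟩
      -- compute m4 = d
      have e1 : ‖S x1 - S x2‖ = d := by rw [hS1, hS2]
      have e2 : Metric.infDist (S x1) (Yfam f (T x1)) = 0 := by
        rw [hS1]; exact Metric.infDist_zero_of_mem hw1mem
      have e3 : Metric.infDist (S x2) (Yfam f (T x2)) = 0 := by
        rw [hS2]; exact Metric.infDist_zero_of_mem hw2mem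
      have e4 : Metric.infDist (S x1) (Yfam f (T x2)) ≤ d := by
        rw [hS1]
        calc Metric.infDist w1 (Yfam f (T x2)) ≤ dist w1 w2 :=
              Metric.infDist_le_dist_of_mem hw2mem
          _ = d := by rw [dist_eq_norm]
      have e5 : Metric.infDist (S x2) (Yfam f (T x1)) ≤ d := by
        rw [hS2]
        calc Metric.infDist w2 (Yfam f (T x1)) ≤ dist w2 w1 :=
              Metric.infDist_le_dist_of_mem hw1mem
          _ = d := by rw [dist_eq_norm, ← norm_sub_rev]
      have e4nn : 0 ≤ Metric.infDist (S x1) (Yfam f (T x2)) := Metric.infDist_nonneg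
      have e5nn : 0 ≤ Metric.infDist (S x2) (Yfam f (T x1)) := Metric.infDist_nonneg
      have hm4 : m4 f S T x1 x2 = d := by
        unfold m4
        rw [e1, e2, e3]
        have h2 : max 0 ((Metric.infDist (S x1) (Yfam f (T x2)) +
            Metric.infDist (S x2) (Yfam f (T x1))) / 2) ≤ d :=
          max_le hd.le (by linarith)
        rw [max_eq_left hd.le, max_eq_left h2]
      -- contraction from the family
      have hcon : d ≤ Phi k * ‖T x1 - T x2‖ := by
        have := hcf.2 (T x1) hTx1 (T x2) hTx2 k hk
        rwa [hf1, hf2] at this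
      set b := ‖T x1 - T x2‖ with hb_def
      have hbpos : 0 < b := by
        rcases lt_or_ge 0 b with h | h
        · exact h
        · exfalso
          have := mul_nonpos_of_nonneg_of_nonpos hΦk.1.le h
          linarith
      set a := (1 / Phi k) * γ (m4 f S T x1 x2) with ha_def
      have hγd : 0 < γ d := hγ.1 d hd
      have hγlt : γ d < d := hγ.2.2 d hd
      have hapos : 0 < a := by
        rw [ha_def, hm4]
        exact mul_pos (one_div_pos.mpr hΦk.1) hγd
      have hab : a ≤ b := by
        rw [ha_def, hm4]
        have h1 : (1 / Phi k) * γ d < (1 / Phi k) * d := by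
          exact mul_lt_mul_of_pos_left hγlt (one_div_pos.mpr hΦk.1)
        have h2 : (1 / Phi k) * d ≤ b := by
          rw [div_mul_eq_mul_div, one_mul, div_le_iff₀ hΦk.1]
          linarith [hcon]
        linarith
      -- apply the contractive condition
      have hmain := hcontr x1 hx1 x2 hx2 k hk
      have hIann : 0 ≤ intPhi phi a := hInonneg a hapos.le
      have hIbnn : 0 ≤ intPhi phi b := hInonneg b hbpos.le
      have hIab : intPhi phi a ≤ intPhi phi b := hImono a b hapos.le hab
      have hFle : F (ψ (intPhi phi a)) (φu (intPhi phi a)) ≤ ψ (intPhi phi a) :=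
        hF.2.1 _ (hψnn _ hIann) _ (hφunn _ hIann)
      have hψle : ψ (intPhi phi a) ≤ ψ (intPhi phi b) :=
        hψ.1 (mem_Ici.mpr hIann) (mem_Ici.mpr hIbnn) hIab
      have heq : F (ψ (intPhi phi a)) (φu (intPhi phi a)) = ψ (intPhi phi a) :=
        le_antisymm hFle (hψle.trans hmain)
      have hIapos : 0 < intPhi phi a := hφpos a hapos
      rcases hF.2.2 _ (hψnn _ hIann) _ (hφunn _ hIann) heq with h0 | h0
      · have : intPhi phi a = 0 := (hψ.2.2 _ hIann).mp h0
        linarith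
      · have : 0 < φu (intPhi phi a) := hφu.2.2.1 _ hIapos
        linarith
    -- diameter is zero, so x is a common fixed point of S and f (T ·) k
    have hdz : Metric.diam (PCset S (fun x => f (T x) k) M) = 0 :=
      Metric.diam_subsingleton hsub
    rw [hdz, zero_pow (Nat.one_le_iff_ne_zero.mp hn₀)] at hdiam
    have hSxx : S x = x := by
      have h0 : ‖S x - x‖ = 0 := le_antisymm hdiam (norm_nonneg _)
      exact sub_eq_zero.mp (norm_eq_zero.mp h0)
    exact ⟨x, hxM, hSxx, (show f (T x) k = S x from hSx.symm).trans hSxx⟩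
  -- now take kₙ → 1
  set k : ℕ → ℝ := fun n => 1 - 1 / ((n : ℝ) + 2) with hk_def
  have hkIoo : ∀ n, k n ∈ Ioo (0:ℝ) 1 := by
    intro n
    have h2 : (2:ℝ) ≤ (n : ℝ) + 2 := by
      have := Nat.cast_nonneg (α := ℝ) n
      linarith
    have hpos : (0:ℝ) < (n : ℝ) + 2 := by positivity
    constructor
    · have : 1 / ((n : ℝ) + 2) ≤ 1 / 2 := by
        apply one_div_le_one_div_of_le <;> linarith
      simp only [hk_def]; linarith
    · have : 0 < 1 / ((n : ℝ) + 2) := by positivity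
      simp only [hk_def]; linarith
  have hktend : Tendsto k atTop (𝓝 1) := by
    have h2 : Tendsto (fun n : ℕ => (n : ℝ) + 2) atTop atTop :=
      tendsto_atTop_add_const_right _ 2 tendsto_natCast_atTop_atTop
    have h3 : Tendsto (fun n : ℕ => 1 / ((n : ℝ) + 2)) atTop (𝓝 0) := by
      simpa [one_div, Pi.inv_def] using h2.inv_tendsto_atTop
    have h4 : Tendsto (fun n : ℕ => (1:ℝ) - 1 / ((n:ℝ) + 2)) atTop (𝓝 (1 - 0)) :=
      Tendsto.sub tendsto_const_nhds h3
    rw [hk_def]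
    simpa using h4
  have hex : ∀ n, ∃ z, z ∈ M ∧ S z = z ∧ f (T z) (k n) = z := by
    intro n
    obtain ⟨z, hzM, h1, h2⟩ := key (k n) (hkIoo n)
    exact ⟨z, hzM, h1, h2⟩
  choose x hxM hSx hfx using hex
  have hTxcl : ∀ n, T (x n) ∈ closure (T '' M) := fun n =>
    subset_closure ⟨x n, hxM n, rfl⟩
  obtain ⟨y, hy, g, hg, hTg⟩ := hcmp.tendsto_subseq hTxcl
  have hyM : y ∈ M := closure_minimal hT.image_subset hMcl hy
  have hTg' : Tendsto (fun n => T (x (g n))) atTop (𝓝 y) := hTg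
  have hxg : Tendsto (fun n => x (g n)) atTop (𝓝 y) := by
    have hjcres := hjc (fun n => k (g n)) 1
      (fun n => ⟨(hkIoo (g n)).1.le, (hkIoo (g n)).2.le⟩)
      ⟨zero_le_one, le_rfl⟩
      (hktend.comp hg.tendsto_atTop)
      (fun n => T (x (g n))) y
      (fun n => hT (hxM (g n))) hyM hTg'
    rw [hfam.2 y hyM] at hjcres
    exact hjcres.congr (fun n => hfx (g n))
  have hxgM : ∀ n, x (g n) ∈ M := fun n => hxM (g n)
  have hxg_within : Tendsto (fun n => x (g n)) atTop (𝓝[M] y) :=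
    tendsto_nhdsWithin_iff.mpr ⟨hxg, Eventually.of_forall hxgM⟩
  have hTy : T y = y := by
    have h1 : Tendsto (fun n => T (x (g n))) atTop (𝓝 (T y)) :=
      (hTcont y hyM).tendsto.comp hxg_within
    exact tendsto_nhds_unique h1 hTg'
  have hSy : S y = y := by
    have h1 : Tendsto (fun n => S (x (g n))) atTop (𝓝 (S y)) :=
      (hScont y hyM).tendsto.comp hxg_within
    have h2 : Tendsto (fun n => S (x (g n))) atTop (𝓝 y) :=
      hxg.congr (fun n => (hSx (g n)).symm)
    exact tendsto_nhds_unique h1 h2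
  exact ⟨y, hyM, hSy, hTy⟩

end
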